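/- Let G be a finite group, N ⊴ G, K ≤ G a subgroup with |G : K| a π-number, and let T ≤ K ∩ N be the subgroup generated by all elements z of K ∩ N whose G-class size |z^G| is a π'-number. Then T is normal in G. -/

import Mathlib

def classSet {G : Type*} [Group G] (x : G) : Set G := {y | IsConj x y}

noncomputable def classSize {G : Type*} [Group G] (x : G) : ℕ := Nat.card (classSet x)

def IsPiNumber (π : Set ℕ) (n : ℕ) : Prop := ∀ p : ℕ, p.Prime → p ∣ n → p ∈ π

lemma classSize_eq_index_centralizer {G : Type*} [Group G] (z : G) :
    classSize z = (Subgroup.centralizer {z}).index := by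
  have horb : classSet z = MulAction.orbit (ConjAct G) z := by
    ext y
    rw [classSet, Set.mem_setOf_eq, ConjAct.mem_orbit_conjAct, isConj_comm]
  rw [Subgroup.centralizer_eq_comap_stabilizer]
  erw [Subgroup.index_comap_of_surjective (G := ConjAct G) (f := ConjAct.toConjAct.toMonoidHom) _ ConjAct.toConjAct.surjective]
  rw [MulAction.index_stabilizer, classSize, horb, Nat.card_coe_set_eq]

/-- If the indices of `K` and `C` are coprime then `G = KC`. -/
lemma exists_mul_of_coprime_index {G : Type*} [Group G] [Finite G] {K C : Subgroup G}
    (h : Nat.Coprime C.index K.index) (g : G) :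
    ∃ k c : G, k ∈ K ∧ c ∈ C ∧ g = k * c := by
  -- the natural injective map K ⧸ (C ⊓ K) → G ⧸ C
  let f : K ⧸ C.subgroupOf K → G ⧸ C :=
    Quotient.map' Subtype.val (fun a b hab => by
      simpa [QuotientGroup.leftRel_apply, Subgroup.mem_subgroupOf] using hab)
  have hinj : Function.Injective f := by
    intro a b
    induction a using Quotient.inductionOn' with | h a => ?_
    induction b using Quotient.inductionOn' with | h b => ?_
    intro hab
    simp only [f, Quotient.map'_mk''] at hab
    have h1 : (a : G)⁻¹ * (b : G) ∈ C := by
      rwa [show (Quotient.mk'' (a : G) : G ⧸ C) = QuotientGroup.mk (a : G) from rfl,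
        show (Quotient.mk'' (b : G) : G ⧸ C) = QuotientGroup.mk (b : G) from rfl,
        QuotientGroup.eq] at hab
    rw [show (Quotient.mk'' a : K ⧸ C.subgroupOf K) = QuotientGroup.mk a from rfl,
      show (Quotient.mk'' b : K ⧸ C.subgroupOf K) = QuotientGroup.mk b from rfl,
      QuotientGroup.eq]
    simpa [Subgroup.mem_subgroupOf] using h1
  have hdvd : C.index ∣ C.relIndex K := by
    have h1 : C.relIndex K * K.index = (C ⊓ K).index := by
      rw [← Subgroup.inf_relIndex_right]
      exact Subgroup.relIndex_mul_index inf_le_right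
    have h2 : K.relIndex C * C.index = (C ⊓ K).index := by
      rw [inf_comm, ← Subgroup.inf_relIndex_right]
      exact Subgroup.relIndex_mul_index inf_le_right
    exact h.dvd_of_dvd_mul_right ⟨K.relIndex C, by rw [h1, ← h2]; ring⟩
  have hle : Nat.card (G ⧸ C) ≤ Nat.card (K ⧸ C.subgroupOf K) :=
    Nat.le_of_dvd (Nat.pos_of_ne_zero (Subgroup.index_ne_zero_of_finite)) hdvd
  have hsurj : Function.Surjective f := (hinj.bijective_of_nat_card_le hle).surjective
  obtain ⟨x, hx⟩ := hsurj (QuotientGroup.mk g)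
  induction x using Quotient.inductionOn'
  rename_i k
  simp only [f, Quotient.map'_mk''] at hx
  have : (k : G)⁻¹ * g ∈ C := by
    rwa [show (Quotient.mk'' (k : G) : G ⧸ C) = QuotientGroup.mk (k : G) from rfl,
      QuotientGroup.eq] at hx
  exact ⟨k, (k : G)⁻¹ * g, k.2, this, by group⟩

theorem stmt15 {G : Type*} [Group G] [Finite G] (N : Subgroup G) (hN : N.Normal)
    (K : Subgroup G) (π : Set ℕ) (hK : IsPiNumber π K.index)
    (T : Subgroup G)
    (hT : T = Subgroup.closure {z : G | z ∈ K ⊓ N ∧ IsPiNumber πᶜ (classSize z)}) :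
    T.Normal := by
  set S : Set G := {z : G | z ∈ K ⊓ N ∧ IsPiNumber πᶜ (classSize z)} with hS
  have hconj : ∀ g : G, ∀ z ∈ S, g * z * g⁻¹ ∈ S := by
    intro g z hz
    obtain ⟨⟨hzK, hzN⟩, hzsize⟩ := hz
    -- class size is preserved under conjugation
    have hsets : classSet (g * z * g⁻¹) = classSet z := by
      ext y
      simp only [classSet, Set.mem_setOf_eq]
      constructor
      · exact fun h => (isConj_iff.mpr ⟨g, rfl⟩).trans h
      · exact fun h => ((isConj_iff.mpr ⟨g, rfl⟩).symm).trans h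
    have hclass : classSize (g * z * g⁻¹) = classSize z := by
      unfold classSize; rw [hsets]
    -- coprimality of indices
    have hcop : Nat.Coprime (Subgroup.centralizer {z}).index K.index := by
      by_contra hc
      obtain ⟨p, hp, hpd⟩ := Nat.exists_prime_and_dvd hc
      have h1 := hK p hp (hpd.trans (Nat.gcd_dvd_right _ _))
      have h2 := hzsize p hp (by
        rw [classSize_eq_index_centralizer]
        exact hpd.trans (Nat.gcd_dvd_left _ _))
      exact h2 h1
    obtain ⟨k, c, hk, hc, rfl⟩ := exists_mul_of_coprime_index hcop g
    have hcz : c * z = z * c := (Subgroup.mem_centralizer_iff.mp hc z rfl).symm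
    have hkzk : (k * c) * z * (k * c)⁻¹ = k * z * k⁻¹ := by
      rw [mul_inv_rev]
      calc k * c * z * (c⁻¹ * k⁻¹) = k * (c * z * c⁻¹) * k⁻¹ := by group
        _ = k * z * k⁻¹ := by rw [hcz]; group
    refine ⟨⟨?_, hN.conj_mem z hzN _⟩, by rw [hclass]; exact hzsize⟩
    rw [hkzk]
    exact K.mul_mem (K.mul_mem hk hzK) (K.inv_mem hk)
  subst hT
  constructor
  intro n hn g
  have hmap : (Subgroup.closure S).map (MulAut.conj g).toMonoidHom ≤ Subgroup.closure S := by
    rw [MonoidHom.map_closure]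
    apply Subgroup.closure_mono
    rintro _ ⟨z, hz, rfl⟩
    exact hconj g z hz
  exact hmap ⟨n, hn, rfl⟩
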